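/- arXiv:2009.08733 — 3 statements merged into one kernel-verified Lean document; each statement's English description precedes it below -/
import Mathlib

section
/- Let (M,g) be a Riemannian manifold and ∇, ∇* affine connections on M that are dual with respect to g, and let p ∈ M. Then the holonomy groups Hol_p^∇ and Hol_p^{∇*} (subgroups of GL(T_pM)) are isomorphic, an isomorphism ψ : Hol_p^∇ → Hol_p^{∇*} being given by ψ(A) = (A*)^{−1}, where A* denotes the adjoint of A with respect to the inner product g_p on T_pM; concretely, if A is the ∇-parallel translation around a piecewise C¹ loop σ based at p, then (A*)^{−1} is the ∇*-parallel translation around σ. -/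
/-!
An (idealized) model of a smooth `n`-dimensional Riemannian manifold `M` together with a
trivialization `Fin n → ℝ` of its tangent bundle along curves:  `g x` is the Riemannian
metric at the point `x`; curves in `M` and vector fields along curves are modelled as
bare functions, and the predicates `Adm` / `AdmF` single out the admissible (piecewise
`C¹`) curves, respectively the admissible fields along an admissible curve.
-/
structure RiemannModel (n : ℕ) (M : Type*) where
  /-- admissible (piecewise `C¹`) curves in `M` -/
  Adm : (ℝ → M) → Prop
  /-- admissible vector fields along an admissible curve -/
  AdmF : (ℝ → M) → (ℝ → (Fin n → ℝ)) → Prop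
  /-- the Riemannian metric -/
  g : M → (Fin n → ℝ) → (Fin n → ℝ) → ℝ
  g_symm : ∀ x v w, g x v w = g x w v
  g_add_left : ∀ x u v w, g x (u + v) w = g x u w + g x v w
  g_smul_left : ∀ x (c : ℝ) v w, g x (c • v) w = c * g x v w
  g_posdef : ∀ x v, v ≠ 0 → 0 < g x v v
  admF_const : ∀ σ v, Adm σ → AdmF σ fun _ => v
  admF_add : ∀ σ X Y, AdmF σ X → AdmF σ Y → AdmF σ fun s => X s + Y s
  admF_smul : ∀ σ (f : ℝ → ℝ) X, Differentiable ℝ f → AdmF σ X → AdmF σ fun s => f s • X s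

/-- An affine connection on `M`, recorded through the covariant derivative
`covD σ X : ℝ → (Fin n → ℝ)` of a vector field `X` along a curve `σ`. -/
structure IsConnection {n : ℕ} {M : Type*} (G : RiemannModel n M)
    (covD : (ℝ → M) → (ℝ → (Fin n → ℝ)) → ℝ → (Fin n → ℝ)) : Prop where
  covD_add : ∀ σ X Y, G.Adm σ → G.AdmF σ X → G.AdmF σ Y →
    ∀ t, covD σ (fun s => X s + Y s) t = covD σ X t + covD σ Y t
  covD_smul : ∀ σ (c : ℝ) X, G.Adm σ → G.AdmF σ X →
    ∀ t, covD σ (fun s => c • X s) t = c • covD σ X t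
  /-- parallel vector fields along admissible curves exist with any initial value -/
  par_exists : ∀ σ, G.Adm σ → ∀ (t₀ : ℝ) (v : Fin n → ℝ),
    ∃ X, G.AdmF σ X ∧ X t₀ = v ∧ ∀ t, covD σ X t = 0
  /-- parallel vector fields along admissible curves are determined by one value -/
  par_unique : ∀ σ X Y, G.Adm σ → G.AdmF σ X → G.AdmF σ Y →
    (∀ t, covD σ X t = 0) → (∀ t, covD σ Y t = 0) → X 0 = Y 0 → X = Y

/-- The connections `D`, `D'` are dual with respect to the metric of `G`:
`d/dt g(X,Y) = g(∇_{γ'} X, Y) + g(X, ∇*_{γ'} Y)` along every admissible curve. -/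
def AreDual {n : ℕ} {M : Type*} (G : RiemannModel n M)
    (D D' : (ℝ → M) → (ℝ → (Fin n → ℝ)) → ℝ → (Fin n → ℝ)) : Prop :=
  ∀ σ X Y, G.Adm σ → G.AdmF σ X → G.AdmF σ Y → ∀ t,
    HasDerivAt (fun s => G.g (σ s) (X s) (Y s))
      (G.g (σ t) (D σ X t) (Y t) + G.g (σ t) (X t) (D' σ Y t)) t

/-- `A` realizes the `D`-parallel translation along `σ` from time `0` to time `T`:
every vector `v` is carried to `A v` by a `D`-parallel field along `σ`. -/
def IsTransportAlong {n : ℕ} {M : Type*} (G : RiemannModel n M)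
    (D : (ℝ → M) → (ℝ → (Fin n → ℝ)) → ℝ → (Fin n → ℝ))
    (σ : ℝ → M) (T : ℝ) (A : Matrix.GeneralLinearGroup (Fin n) ℝ) : Prop :=
  ∀ v : Fin n → ℝ, ∃ X : ℝ → (Fin n → ℝ), G.AdmF σ X ∧ X 0 = v ∧
    (∀ t, D σ X t = 0) ∧ X T = (A : Matrix (Fin n) (Fin n) ℝ).mulVec v

/-- The set of parallel translations around piecewise `C¹` loops based at `p`. -/
def loopTransports {n : ℕ} {M : Type*} (G : RiemannModel n M)
    (D : (ℝ → M) → (ℝ → (Fin n → ℝ)) → ℝ → (Fin n → ℝ)) (p : M) :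
    Set (Matrix.GeneralLinearGroup (Fin n) ℝ) :=
  {A | ∃ (σ : ℝ → M) (T : ℝ), 0 < T ∧ G.Adm σ ∧ σ 0 = p ∧ σ T = p ∧
    IsTransportAlong G D σ T A}

/-- The holonomy group of the connection `D` at `p`. -/
noncomputable def holonomyGroup {n : ℕ} {M : Type*} (G : RiemannModel n M)
    (D : (ℝ → M) → (ℝ → (Fin n → ℝ)) → ℝ → (Fin n → ℝ)) (p : M) :
    Subgroup (Matrix.GeneralLinearGroup (Fin n) ℝ) :=
  Subgroup.closure (loopTransports G D p)

/-!
STATEMENT 4.  Let `(M,g)` be a Riemannian manifold, `∇, ∇*` affine connections dual with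
respect to `g`, and `p ∈ M`.  Then `Hol_p^∇ ≅ Hol_p^{∇*}`, an isomorphism
`ψ : Hol_p^∇ → Hol_p^{∇*}` being `ψ(A) = (A*)⁻¹` where `A*` is the `g_p`-adjoint of `A`
(so `g_p(A x, y) = g_p(x, (ψ A)⁻¹ y)`); concretely, if `A` is the `∇`-parallel
translation around a piecewise `C¹` loop `σ` based at `p` and `B = A*` is its
`g_p`-adjoint, then `B⁻¹ = (A*)⁻¹` is the `∇*`-parallel translation around `σ`.
-/
open Matrix

lemma dp_shift {n : ℕ} (v w : Fin n → ℝ) (A : Matrix (Fin n) (Fin n) ℝ) :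
    (A.mulVec v) ⬝ᵥ w = v ⬝ᵥ (A.transpose.mulVec w) := by
  rw [Matrix.mulVec_transpose, dotProduct_comm, Matrix.dotProduct_mulVec,
    dotProduct_comm]

/-- transpose-inverse as a multiplicative automorphism of units of matrices -/
def tInv (n : ℕ) : (Matrix (Fin n) (Fin n) ℝ)ˣ ≃* (Matrix (Fin n) (Fin n) ℝ)ˣ where
  toFun A := ⟨(A.inv)ᵀ, (A.val)ᵀ,
    by rw [← Matrix.transpose_mul, A.val_inv, Matrix.transpose_one],
    by rw [← Matrix.transpose_mul, A.inv_val, Matrix.transpose_one]⟩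
  invFun A := ⟨(A.inv)ᵀ, (A.val)ᵀ,
    by rw [← Matrix.transpose_mul, A.val_inv, Matrix.transpose_one],
    by rw [← Matrix.transpose_mul, A.inv_val, Matrix.transpose_one]⟩
  left_inv A := by ext; simp
  right_inv A := by ext; simp
  map_mul' A B := Units.ext <| by
    show ((A*B).inv)ᵀ = (A.inv)ᵀ * (B.inv)ᵀ
    rw [show (A*B).inv = B.inv * A.inv from rfl, Matrix.transpose_mul]

lemma tInv_val {n : ℕ} (A : (Matrix (Fin n) (Fin n) ℝ)ˣ) : (tInv n A).val = (A.inv)ᵀ := rfl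
lemma tInv_inv_val {n : ℕ} (A : (Matrix (Fin n) (Fin n) ℝ)ˣ) :
    ((tInv n A)⁻¹).val = (A.val)ᵀ := rfl

namespace RiemannModel
variable {n : ℕ} {M : Type*} (G : RiemannModel n M) (x : M)

lemma g_zero_left (w : Fin n → ℝ) : G.g x 0 w = 0 := by
  have := G.g_smul_left x 0 0 w
  simpa using this

lemma g_zero_right (v : Fin n → ℝ) : G.g x v 0 = 0 := by
  rw [G.g_symm]; exact G.g_zero_left x v

/-- the metric at `x` in the left slot as a linear map -/
noncomputable def gL (w : Fin n → ℝ) : (Fin n → ℝ) →ₗ[ℝ] ℝ where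
  toFun v := G.g x v w
  map_add' a b := G.g_add_left x a b w
  map_smul' c a := G.g_smul_left x c a w

/-- the Gram matrix of the metric at `x` -/
noncomputable def gMat : Matrix (Fin n) (Fin n) ℝ :=
  fun i j => G.g x (Pi.single i 1) (Pi.single j 1)


lemma g_eq (v w : Fin n → ℝ) : G.g x v w = v ⬝ᵥ (G.gMat x).mulVec w := by
  have hv : v = ∑ i, v i • (Pi.single i (1:ℝ) : Fin n → ℝ) := by
    conv_lhs => rw [← Finset.univ_sum_single v]
    refine Finset.sum_congr rfl fun i _ => ?_
    ext j; by_cases h : j = i <;> simp [h, Pi.single_apply]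
  have key : ∀ u, G.g x u w = ∑ j, (G.g x u (Pi.single j 1)) * w j := by
    intro u
    have hw : w = ∑ j, w j • (Pi.single j (1:ℝ) : Fin n → ℝ) := by
      conv_lhs => rw [← Finset.univ_sum_single w]
      refine Finset.sum_congr rfl fun j _ => ?_
      ext i; by_cases h : i = j <;> simp [h, Pi.single_apply]
    calc G.g x u w = G.g x w u := G.g_symm x u w
    _ = G.gL x u (∑ j, w j • (Pi.single j (1:ℝ) : Fin n → ℝ)) := by rw [← hw]; rfl
    _ = ∑ j, w j • (G.gL x u (Pi.single j 1)) := by rw [map_sum]; simp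
    _ = ∑ j, (G.g x u (Pi.single j 1)) * w j := by
        refine Finset.sum_congr rfl fun j _ => ?_
        show w j * G.g x (Pi.single j 1) u = _
        rw [G.g_symm, mul_comm]
  calc G.g x v w = G.gL x w (∑ i, v i • (Pi.single i (1:ℝ) : Fin n → ℝ)) := by rw [← hv]; rfl
  _ = ∑ i, v i • (G.gL x w (Pi.single i 1)) := by rw [map_sum]; simp
  _ = ∑ i, v i * ∑ j, G.g x (Pi.single i 1) (Pi.single j 1) * w j := by
      refine Finset.sum_congr rfl fun i _ => ?_
      rw [smul_eq_mul]
      congr 1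
      exact key (Pi.single i 1)
  _ = v ⬝ᵥ (G.gMat x).mulVec w := by
      refine Finset.sum_congr rfl fun i _ => ?_
      simp [Matrix.mulVec, dotProduct, gMat]

lemma gMat_transpose : (G.gMat x)ᵀ = G.gMat x := by
  ext i j; exact G.g_symm x (Pi.single j 1) (Pi.single i 1)


lemma gMat_det_ne_zero : (G.gMat x).det ≠ 0 := by
  intro h
  obtain ⟨v, hv, hv0⟩ := (Matrix.exists_mulVec_eq_zero_iff).2 h
  have := G.g_posdef x v hv
  rw [G.g_eq x v v, hv0] at this
  simp at this

lemma nondeg {n : ℕ} {M : Type*} (G : RiemannModel n M) (x : M) {a b : Fin n → ℝ}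
    (h : ∀ u, G.g x u a = G.g x u b) : a = b := by
  have hm : (G.gMat x).mulVec a = (G.gMat x).mulVec b := by
    ext i
    have hi := h (Pi.single i 1)
    rw [G.g_eq, G.g_eq] at hi
    simpa [dotProduct, Pi.single_apply] using hi
  have hinv : (G.gMat x)⁻¹ * (G.gMat x) = 1 :=
    Matrix.nonsing_inv_mul _ (isUnit_iff_ne_zero.mpr (G.gMat_det_ne_zero x))
  have h2 : ∀ w, (G.gMat x)⁻¹.mulVec ((G.gMat x).mulVec w) = w := by
    intro w
    rw [Matrix.mulVec_mulVec, hinv, Matrix.one_mulVec]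
  calc a = (G.gMat x)⁻¹.mulVec ((G.gMat x).mulVec a) := (h2 a).symm
  _ = (G.gMat x)⁻¹.mulVec ((G.gMat x).mulVec b) := by rw [hm]
  _ = b := h2 b

end RiemannModel

open Matrix

/-- Main analytic step: the inverse adjoint of a parallel transport of `D` is a
parallel transport of the dual connection `D'`. -/
lemma transport_dual {n : ℕ} {M : Type*} (G : RiemannModel n M)
    (D D' : (ℝ → M) → (ℝ → (Fin n → ℝ)) → ℝ → (Fin n → ℝ))
    (hD' : IsConnection G D') (hdual : AreDual G D D') (p : M)
    (σ : ℝ → M) (T : ℝ) (A B : Matrix.GeneralLinearGroup (Fin n) ℝ)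
    (hσ : G.Adm σ) (hσ0 : σ 0 = p) (hσT : σ T = p)
    (hA : IsTransportAlong G D σ T A)
    (hadj : ∀ x y : Fin n → ℝ,
      G.g p ((A : Matrix (Fin n) (Fin n) ℝ).mulVec x) y
        = G.g p x ((B : Matrix (Fin n) (Fin n) ℝ).mulVec y)) :
    IsTransportAlong G D' σ T B⁻¹ := by
  intro v
  obtain ⟨Y, hYadm, hYT, hYpar⟩ :=
    hD'.par_exists σ hσ T (((B⁻¹ : Matrix.GeneralLinearGroup (Fin n) ℝ) :
      Matrix (Fin n) (Fin n) ℝ).mulVec v)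
  refine ⟨Y, hYadm, ?_, hYpar, hYT⟩
  refine RiemannModel.nondeg G p fun u => ?_
  obtain ⟨X, hXadm, hX0, hXpar, hXT⟩ := hA u
  have hder : ∀ t, HasDerivAt (fun s => G.g (σ s) (X s) (Y s)) 0 t := by
    intro t
    have h := hdual σ X Y hσ hXadm hYadm t
    rw [hXpar t, hYpar t] at h
    simpa [G.g_zero_left, G.g_zero_right] using h
  have hconst := is_const_of_deriv_eq_zero
    (fun t => (hder t).differentiableAt) (fun t => (hder t).deriv) 0 T
  have hBB : (B : Matrix (Fin n) (Fin n) ℝ).mulVec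
      (((B⁻¹ : Matrix.GeneralLinearGroup (Fin n) ℝ) : Matrix (Fin n) (Fin n) ℝ).mulVec v) = v := by
    rw [Matrix.mulVec_mulVec, Units.mul_inv, Matrix.one_mulVec]
  rw [hσ0, hσT, hX0, hXT, hYT, hadj, hBB] at hconst
  exact hconst
theorem dual_holonomy_groups_isomorphic
    {n : ℕ} {M : Type*} (G : RiemannModel n M)
    (D D' : (ℝ → M) → (ℝ → (Fin n → ℝ)) → ℝ → (Fin n → ℝ))
    (hD : IsConnection G D) (hD' : IsConnection G D')
    (hdual : AreDual G D D') (p : M) :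
    -- concretely: the inverse `g_p`-adjoint of a loop transport of `∇` is a loop
    -- transport of `∇*` along the same loop
    (∀ (σ : ℝ → M) (T : ℝ) (A B : Matrix.GeneralLinearGroup (Fin n) ℝ),
      0 < T → G.Adm σ → σ 0 = p → σ T = p →
      IsTransportAlong G D σ T A →
      (∀ x y : Fin n → ℝ,
        G.g p ((A : Matrix (Fin n) (Fin n) ℝ).mulVec x) y
          = G.g p x ((B : Matrix (Fin n) (Fin n) ℝ).mulVec y)) →
      IsTransportAlong G D' σ T B⁻¹) ∧
    -- and `A ↦ (A*)⁻¹` is an isomorphism of the holonomy groups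
    ∃ ψ : holonomyGroup G D p ≃* holonomyGroup G D' p,
      ∀ (A : holonomyGroup G D p) (x y : Fin n → ℝ),
        G.g p (((A : Matrix.GeneralLinearGroup (Fin n) ℝ) : Matrix (Fin n) (Fin n) ℝ).mulVec x) y
          = G.g p x
              ((((ψ A : Matrix.GeneralLinearGroup (Fin n) ℝ)⁻¹ : Matrix.GeneralLinearGroup (Fin n) ℝ)
                  : Matrix (Fin n) (Fin n) ℝ).mulVec y) := by
  classical
  have hPdet : IsUnit (G.gMat p).det := isUnit_iff_ne_zero.mpr (G.gMat_det_ne_zero p)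
  set P : Matrix (Fin n) (Fin n) ℝ := G.gMat p with hPdef
  have hPP : P⁻¹ * P = 1 := Matrix.nonsing_inv_mul P hPdet
  have hPP' : P * P⁻¹ = 1 := Matrix.mul_nonsing_inv P hPdet
  have hPsymm : Pᵀ = P := G.gMat_transpose p
  have hPinvT : (P⁻¹)ᵀ = P⁻¹ := by rw [Matrix.transpose_nonsing_inv, hPsymm]
  let Pu : Matrix.GeneralLinearGroup (Fin n) ℝ := ⟨P, P⁻¹, hPP', hPP⟩
  let Φ : Matrix.GeneralLinearGroup (Fin n) ℝ ≃* Matrix.GeneralLinearGroup (Fin n) ℝ :=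
    (tInv n).trans (MulAut.conj Pu⁻¹)
  have hΦval : ∀ A : Matrix.GeneralLinearGroup (Fin n) ℝ,
      (Φ A : Matrix (Fin n) (Fin n) ℝ)
        = P⁻¹ * ((A⁻¹ : Matrix.GeneralLinearGroup (Fin n) ℝ) : Matrix (Fin n) (Fin n) ℝ)ᵀ * P := by
    intro A; rfl
  have hΦinv : ∀ A : Matrix.GeneralLinearGroup (Fin n) ℝ,
      (((Φ A)⁻¹ : Matrix.GeneralLinearGroup (Fin n) ℝ) : Matrix (Fin n) (Fin n) ℝ)
        = P⁻¹ * ((A : Matrix (Fin n) (Fin n) ℝ))ᵀ * P := by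
    intro A
    rw [← map_inv Φ A, hΦval, inv_inv]
  have hadjΦ : ∀ (A : Matrix.GeneralLinearGroup (Fin n) ℝ) (x y : Fin n → ℝ),
      G.g p ((A : Matrix (Fin n) (Fin n) ℝ).mulVec x) y
        = G.g p x ((((Φ A)⁻¹ : Matrix.GeneralLinearGroup (Fin n) ℝ) :
            Matrix (Fin n) (Fin n) ℝ).mulVec y) := by
    intro A x y
    rw [G.g_eq, G.g_eq, dp_shift, ← hPdef]
    congr 1
    rw [Matrix.mulVec_mulVec, Matrix.mulVec_mulVec, hΦinv]
    rw [← mul_assoc, ← mul_assoc, hPP', one_mul]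
  have hΦΦ : ∀ A : Matrix.GeneralLinearGroup (Fin n) ℝ, Φ (Φ A) = A := by
    intro A
    apply Units.ext
    rw [hΦval, hΦinv, Matrix.transpose_mul, Matrix.transpose_mul, hPsymm, hPinvT,
      Matrix.transpose_transpose]
    calc P⁻¹ * (P * ((A : Matrix (Fin n) (Fin n) ℝ) * P⁻¹)) * P
        = (P⁻¹ * P) * (A : Matrix (Fin n) (Fin n) ℝ) * (P⁻¹ * P) := by
          simp only [mul_assoc]
    _ = (A : Matrix (Fin n) (Fin n) ℝ) := by rw [hPP, one_mul, mul_one]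
  have hdual' : AreDual G D' D := by
    intro σ X Y hσ hX hY t
    have e1 : (fun s => G.g (σ s) (X s) (Y s)) = (fun s => G.g (σ s) (Y s) (X s)) :=
      funext fun s => G.g_symm _ _ _
    rw [e1, G.g_symm (σ t) (D' σ X t) (Y t), G.g_symm (σ t) (X t) (D σ Y t), add_comm]
    exact hdual σ Y X hσ hY hX t
  refine ⟨fun σ T A B hT hσ h0 hT' htr hadj =>
    transport_dual G D D' hD' hdual p σ T A B hσ h0 hT' htr hadj, ?_⟩
  have himg : (fun A => Φ A) '' loopTransports G D p = loopTransports G D' p := by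
    apply Set.Subset.antisymm
    · rintro _ ⟨A, ⟨σ, T, hT, hσ, h0, hT', htr⟩, rfl⟩
      refine ⟨σ, T, hT, hσ, h0, hT', ?_⟩
      have h2 := transport_dual G D D' hD' hdual p σ T A (Φ A)⁻¹ hσ h0 hT' htr
        (fun x y => hadjΦ A x y)
      simpa [inv_inv] using h2
    · intro C hC
      obtain ⟨σ, T, hT, hσ, h0, hT', htr⟩ := hC
      have h2 := transport_dual G D' D hD hdual' p σ T C (Φ C)⁻¹ hσ h0 hT' htr
        (fun x y => hadjΦ C x y)
      refine ⟨Φ C, ⟨σ, T, hT, hσ, h0, hT', ?_⟩, hΦΦ C⟩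
      simpa [inv_inv] using h2
  have hmap : (holonomyGroup G D p).map (Φ :
      Matrix.GeneralLinearGroup (Fin n) ℝ →* Matrix.GeneralLinearGroup (Fin n) ℝ)
      = holonomyGroup G D' p := by
    unfold holonomyGroup
    rw [MonoidHom.map_closure]
    exact congrArg Subgroup.closure himg
  refine ⟨(Φ.subgroupMap (holonomyGroup G D p)).trans (MulEquiv.subgroupCongr hmap), ?_⟩
  intro A x y
  exact hadjΦ (A : Matrix.GeneralLinearGroup (Fin n) ℝ) x y
end

section
/- Let U ⊆ ℝⁿ be open with coordinates (x₁,…,xₙ), and let φ_i(x_i) and A_i(x_i) be smooth functions of one variable with φ₁ < φ₂ < ⋯ < φₙ pointwise, each φ_i nowhere zero and each A_i nowhere zero. Set Π_i = (φ_i−φ₁)⋯(φ_i−φ_{i−1})(φ_{i+1}−φ_i)⋯(φₙ−φ_i), ρ_i = 1/(φ₁φ₂⋯φₙ · φ_i), g = Σ_i Π_i A_i dx_i², g̃ = ± Σ_i ρ_i Π_i A_i dx_i², and φ = ½ log|φ₁φ₂⋯φₙ|. Then the weighted connection ∇^φ of (U, g, φ) coincides with the Levi-Civita connection of (U, g̃);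 equivalently, the Christoffel symbols satisfy Γ̃ᵏ_{ij} = Γᵏ_{ij} − (∂_i φ)δ_jᵏ − (∂_j φ)δ_iᵏ for all i, j, k. In particular g and g̃ are projectively equivalent. -/
/-- The partial derivative `∂f/∂x_i` of a function on `ℝⁿ`. -/
noncomputable def partialD {n : ℕ} (i : Fin n) (f : (Fin n → ℝ) → ℝ)
    (x : Fin n → ℝ) : ℝ :=
  deriv (fun s => f (Function.update x i s)) (x i)

/-- The Christoffel symbols `Γᵏᵢⱼ` of a diagonal (pseudo-Riemannian) metric
`g = Σ_i G_i dx_i²` on `ℝⁿ`, from the standard formula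
`Γᵏᵢⱼ = ½ gᵏˡ (∂_i g_{jl} + ∂_j g_{il} − ∂_l g_{ij})`. -/
noncomputable def diagChristoffel {n : ℕ} (G : Fin n → (Fin n → ℝ) → ℝ)
    (k i j : Fin n) (x : Fin n → ℝ) : ℝ :=
  if i = j then
    (if k = i then partialD i (G i) x / (2 * G i x)
     else -partialD k (G i) x / (2 * G k x))
  else if k = i then partialD j (G i) x / (2 * G i x)
  else if k = j then partialD i (G j) x / (2 * G j x)
  else 0

/-- The factor `Π_i = (φ_i−φ₁)⋯(φ_i−φ_{i−1})·(φ_{i+1}−φ_i)⋯(φ_n−φ_i)` of the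
Levi-Civita construction, where `φ_l` is a function of the coordinate `x_l` alone. -/
noncomputable def lcProd {n : ℕ} (φf : Fin n → ℝ → ℝ) (i : Fin n)
    (x : Fin n → ℝ) : ℝ :=
  (∏ l ∈ Finset.univ.filter (fun l => l < i), (φf i (x i) - φf l (x l))) *
  (∏ l ∈ Finset.univ.filter (fun l => i < l), (φf l (x l) - φf i (x i)))

theorem prod_update' {n : ℕ} (φf : Fin n → ℝ → ℝ) (x : Fin n → ℝ) (j : Fin n) (s : ℝ) :
    (∏ m, φf m (Function.update x j s m))
      = φf j s * ∏ m ∈ Finset.univ.erase j, φf m (x m) := by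
  rw [← Finset.mul_prod_erase Finset.univ (fun m => φf m (Function.update x j s m))
      (Finset.mem_univ j)]
  congr 1
  · simp
  · exact Finset.prod_congr rfl fun m hm => by
      rw [Function.update_of_ne (Finset.ne_of_mem_erase hm)]

theorem lcProd_update_self {n : ℕ} (φf : Fin n → ℝ → ℝ) (x : Fin n → ℝ) (i : Fin n) (s : ℝ) :
    lcProd φf i (Function.update x i s)
      = (∏ l ∈ Finset.univ.filter (fun l => l < i), (φf i s - φf l (x l))) *
        (∏ l ∈ Finset.univ.filter (fun l => i < l), (φf l (x l) - φf i s)) := by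
  unfold lcProd
  congr 1
  · refine Finset.prod_congr rfl fun l hl => ?_
    have hl' : l < i := (Finset.mem_filter.mp hl).2
    rw [Function.update_self, Function.update_of_ne hl'.ne]
  · refine Finset.prod_congr rfl fun l hl => ?_
    have hl' : i < l := (Finset.mem_filter.mp hl).2
    rw [Function.update_self, Function.update_of_ne hl'.ne']

theorem lcProd_update_ne {n : ℕ} (φf : Fin n → ℝ → ℝ) (x : Fin n → ℝ) (i k : Fin n)
    (hki : k ≠ i) (s : ℝ) :
    lcProd φf i (Function.update x k s) * (φf k (x k) - φf i (x i))
      = lcProd φf i x * (φf k s - φf i (x i)) := by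
  unfold lcProd
  have hxi : Function.update x k s i = x i := Function.update_of_ne (Ne.symm hki) _ _
  rcases lt_or_gt_of_ne hki with hlt | hgt
  · -- k < i : factor in first product
    have hk1 : k ∈ Finset.univ.filter (fun l => l < i) := by simp [hlt]
    rw [← Finset.mul_prod_erase _ _ hk1, ← Finset.mul_prod_erase _ (fun l => φf i (x i) - φf l (x l)) hk1]
    have h1 : ∏ l ∈ (Finset.univ.filter (fun l => l < i)).erase k,
        (φf i (Function.update x k s i) - φf l (Function.update x k s l))
        = ∏ l ∈ (Finset.univ.filter (fun l => l < i)).erase k, (φf i (x i) - φf l (x l)) := by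
      refine Finset.prod_congr rfl fun l hl => ?_
      rw [hxi, Function.update_of_ne (Finset.ne_of_mem_erase hl)]
    have h2 : ∏ l ∈ Finset.univ.filter (fun l => i < l),
        (φf l (Function.update x k s l) - φf i (Function.update x k s i))
        = ∏ l ∈ Finset.univ.filter (fun l => i < l), (φf l (x l) - φf i (x i)) := by
      refine Finset.prod_congr rfl fun l hl => ?_
      have hl' : i < l := (Finset.mem_filter.mp hl).2
      rw [hxi, Function.update_of_ne (hlt.trans hl').ne']
    rw [h1, h2, hxi, Function.update_self]
    ring
  · -- i < k : factor in second product
    have hk2 : k ∈ Finset.univ.filter (fun l => i < l) := by simp [hgt]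
    rw [← Finset.mul_prod_erase _ _ hk2, ← Finset.mul_prod_erase _ (fun l => φf l (x l) - φf i (x i)) hk2]
    have h1 : ∏ l ∈ Finset.univ.filter (fun l => l < i),
        (φf i (Function.update x k s i) - φf l (Function.update x k s l))
        = ∏ l ∈ Finset.univ.filter (fun l => l < i), (φf i (x i) - φf l (x l)) := by
      refine Finset.prod_congr rfl fun l hl => ?_
      have hl' : l < i := (Finset.mem_filter.mp hl).2
      rw [hxi, Function.update_of_ne (hl'.trans hgt).ne]
    have h2 : ∏ l ∈ (Finset.univ.filter (fun l => i < l)).erase k,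
        (φf l (Function.update x k s l) - φf i (Function.update x k s i))
        = ∏ l ∈ (Finset.univ.filter (fun l => i < l)).erase k, (φf l (x l) - φf i (x i)) := by
      refine Finset.prod_congr rfl fun l hl => ?_
      rw [hxi, Function.update_of_ne (Finset.ne_of_mem_erase hl)]
    rw [h1, h2, hxi, Function.update_self]
    ring


theorem phi_ne {n : ℕ} (φf : Fin n → ℝ → ℝ) (x : Fin n → ℝ)
    (hord : ∀ i j : Fin n, i < j → ∀ s t : ℝ, φf i s < φf j t) (i k : Fin n)
    (hki : k ≠ i) : φf k (x k) - φf i (x i) ≠ 0 := by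
  rcases lt_or_gt_of_ne hki with h | h
  · exact sub_ne_zero.mpr (hord k i h (x k) (x i)).ne
  · exact sub_ne_zero.mpr (hord i k h (x i) (x k)).ne'

theorem eraseProd_ne {n : ℕ} (φf : Fin n → ℝ → ℝ) (x : Fin n → ℝ)
    (hφ0 : ∀ (i : Fin n) (s : ℝ), φf i s ≠ 0) (k : Fin n) :
    (∏ m ∈ Finset.univ.erase k, φf m (x m)) ≠ 0 :=
  Finset.prod_ne_zero_iff.mpr fun m _ => hφ0 m (x m)

theorem lcProd_ne {n : ℕ} (φf : Fin n → ℝ → ℝ) (x : Fin n → ℝ)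
    (hord : ∀ i j : Fin n, i < j → ∀ s t : ℝ, φf i s < φf j t) (i : Fin n) :
    lcProd φf i x ≠ 0 := by
  unfold lcProd
  apply mul_ne_zero <;> refine Finset.prod_ne_zero_iff.mpr fun l hl => ?_
  · exact sub_ne_zero.mpr (hord l i (Finset.mem_filter.mp hl).2 (x l) (x i)).ne'
  · exact sub_ne_zero.mpr (hord i l (Finset.mem_filter.mp hl).2 (x i) (x l)).ne'

theorem hasDerivAt_G_ne {n : ℕ} (φf Af : Fin n → ℝ → ℝ) (x : Fin n → ℝ)
    (hφdiff : ∀ i, Differentiable ℝ (φf i))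
    (hord : ∀ i j : Fin n, i < j → ∀ s t : ℝ, φf i s < φf j t) (i k : Fin n) (hki : k ≠ i) :
    HasDerivAt (fun s => lcProd φf i (Function.update x k s) * Af i ((Function.update x k s) i))
      (lcProd φf i x * deriv (φf k) (x k) / (φf k (x k) - φf i (x i)) * Af i (x i)) (x k) := by
  have hsub := phi_ne φf x hord i k hki
  have heq : (fun s => lcProd φf i (Function.update x k s) * Af i ((Function.update x k s) i))
      = fun s => lcProd φf i x * (φf k s - φf i (x i)) / (φf k (x k) - φf i (x i)) * Af i (x i) := by
    funext s
    rw [Function.update_of_ne (Ne.symm hki)]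
    congr 1
    rw [eq_div_iff hsub]
    exact lcProd_update_ne φf x i k hki s
  rw [heq]
  have h1 : HasDerivAt (fun s => lcProd φf i x * (φf k s - φf i (x i)) / (φf k (x k) - φf i (x i)) * Af i (x i))
      (lcProd φf i x * deriv (φf k) (x k) / (φf k (x k) - φf i (x i)) * Af i (x i)) (x k) := by
    have := (((hφdiff k (x k)).hasDerivAt.sub_const (φf i (x i))).const_mul
      (lcProd φf i x)).div_const (φf k (x k) - φf i (x i)) |>.mul_const (Af i (x i))
    simpa using this
  exact h1

theorem diffAt_G_self {n : ℕ} (φf Af : Fin n → ℝ → ℝ) (x : Fin n → ℝ)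
    (hφdiff : ∀ i, Differentiable ℝ (φf i)) (hAdiff : ∀ i, Differentiable ℝ (Af i)) (i : Fin n) :
    DifferentiableAt ℝ (fun s => lcProd φf i (Function.update x i s) * Af i ((Function.update x i s) i)) (x i) := by
  have heq : (fun s => lcProd φf i (Function.update x i s) * Af i ((Function.update x i s) i))
      = fun s => ((∏ l ∈ Finset.univ.filter (fun l => l < i), (φf i s - φf l (x l))) *
        (∏ l ∈ Finset.univ.filter (fun l => i < l), (φf l (x l) - φf i s))) * Af i s := by
    funext s
    rw [lcProd_update_self, Function.update_self]
  rw [heq]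
  apply DifferentiableAt.mul _ ((hAdiff i) (x i))
  apply DifferentiableAt.mul
  · exact DifferentiableAt.fun_finsetProd fun l _ => ((hφdiff i) (x i)).sub_const _
  · exact DifferentiableAt.fun_finsetProd fun l _ => (differentiableAt_const _).sub ((hφdiff i) (x i))

theorem partialD_phiw {n : ℕ} (φf : Fin n → ℝ → ℝ) (x : Fin n → ℝ)
    (hφdiff : ∀ i, Differentiable ℝ (φf i)) (hφ0 : ∀ (i : Fin n) (s : ℝ), φf i s ≠ 0) (j : Fin n) :
    partialD j (fun y => 1 / 2 * Real.log |∏ m, φf m (y m)|) x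
      = deriv (φf j) (x j) / (2 * φf j (x j)) := by
  set C := ∏ m ∈ Finset.univ.erase j, φf m (x m) with hC
  have hCne : C ≠ 0 := eraseProd_ne φf x hφ0 j
  have heq : (fun s => (fun y => (1/2 : ℝ) * Real.log |∏ m, φf m (y m)|) (Function.update x j s))
      = fun s => (1/2 : ℝ) * Real.log (φf j s * C) := by
    funext s
    simp only [prod_update' φf x j s, ← hC, Real.log_abs]
  have hne : φf j (x j) * C ≠ 0 := mul_ne_zero (hφ0 j (x j)) hCne
  have hder : HasDerivAt (fun s => (1/2 : ℝ) * Real.log (φf j s * C))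
      ((1/2 : ℝ) * (deriv (φf j) (x j) * C / (φf j (x j) * C))) (x j) :=
    (((hφdiff j (x j)).hasDerivAt.mul_const C).log hne).const_mul _
  unfold partialD
  rw [heq, hder.deriv]
  have hφj : φf j (x j) ≠ 0 := hφ0 j (x j)
  field_simp

set_option linter.unusedSectionVars false
section Aux2
variable {n : ℕ} (φf Af : Fin n → ℝ → ℝ) (ε : ℝ)
  (hφdiff : ∀ i, Differentiable ℝ (φf i)) (hAdiff : ∀ i, Differentiable ℝ (Af i))
  (hord : ∀ i j : Fin n, i < j → ∀ s t : ℝ, φf i s < φf j t)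
  (hφ0 : ∀ (i : Fin n) (s : ℝ), φf i s ≠ 0) (hA0 : ∀ (i : Fin n) (s : ℝ), Af i s ≠ 0)
  (x : Fin n → ℝ)

include hφdiff hAdiff hord hφ0 hA0 in
theorem M1 (hε : ε ≠ 0) (i k : Fin n) :
    deriv (fun s => ε * (lcProd φf i (Function.update x k s) * Af i (Function.update x k s i) /
        ((∏ m, φf m (Function.update x k s m)) * φf i (Function.update x k s i)))) (x k) /
      (2 * (ε * (lcProd φf i x * Af i (x i) / ((∏ m, φf m (x m)) * φf i (x i)))))
    = deriv (fun s => lcProd φf i (Function.update x k s) * Af i (Function.update x k s i)) (x k) /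
        (2 * (lcProd φf i x * Af i (x i)))
      - (if k = i then deriv (φf i) (x i) / φf i (x i)
         else deriv (φf k) (x k) / (2 * φf k (x k))) := by
  have hCne := eraseProd_ne φf x hφ0 k
  set C := ∏ m ∈ Finset.univ.erase k, φf m (x m) with hCdef
  have hQ : (∏ m, φf m (x m)) = φf k (x k) * C :=
    (Finset.mul_prod_erase Finset.univ (fun m => φf m (x m)) (Finset.mem_univ k)).symm
  have hlcne : lcProd φf i x ≠ 0 := lcProd_ne φf x hord i
  have hAne : Af i (x i) ≠ 0 := hA0 i (x i)
  have hφk : φf k (x k) ≠ 0 := hφ0 k (x k)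
  have hφi : φf i (x i) ≠ 0 := hφ0 i (x i)
  have hupd : Function.update x k (x k) = x := Function.update_eq_self k x
  by_cases hk : k = i
  · subst hk
    rw [if_pos rfl]
    have hgd := diffAt_G_self φf Af x hφdiff hAdiff k
    set D := deriv (fun s => lcProd φf k (Function.update x k s) *
        Af k (Function.update x k s k)) (x k) with hD
    have hg : HasDerivAt (fun s => lcProd φf k (Function.update x k s) *
        Af k (Function.update x k s k)) D (x k) := hgd.hasDerivAt
    have hdk := (hφdiff k (x k)).hasDerivAt
    set d := deriv (φf k) (x k) with hd
    have hden : HasDerivAt (fun s => φf k s * C * φf k s)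
        (d * C * φf k (x k) + φf k (x k) * C * d) (x k) := (hdk.mul_const C).mul hdk
    have hdenne : φf k (x k) * C * φf k (x k) ≠ 0 := mul_ne_zero (mul_ne_zero hφk hCne) hφk
    have heq : (fun s => ε * (lcProd φf k (Function.update x k s) * Af k (Function.update x k s k) /
        ((∏ m, φf m (Function.update x k s m)) * φf k (Function.update x k s k)))) =
        fun s => ε * (lcProd φf k (Function.update x k s) * Af k (Function.update x k s k) /
          (φf k s * C * φf k s)) := by
      funext s
      rw [prod_update' φf x k s, Function.update_self]
    have hGt : HasDerivAt (fun s => ε * (lcProd φf k (Function.update x k s) *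
          Af k (Function.update x k s k) / (φf k s * C * φf k s)))
        (ε * ((D * (φf k (x k) * C * φf k (x k)) -
          lcProd φf k (Function.update x k (x k)) * Af k (Function.update x k (x k) k) *
            (d * C * φf k (x k) + φf k (x k) * C * d)) / (φf k (x k) * C * φf k (x k)) ^ 2))
        (x k) := (hg.div hden hdenne).const_mul ε
    rw [heq, hGt.deriv, hQ, hupd]
    field_simp
    ring
  · rw [if_neg hk]
    have hsub := phi_ne φf x hord i k hk
    set D := deriv (fun s => lcProd φf i (Function.update x k s) *
        Af i (Function.update x k s i)) (x k) with hD
    have hg : HasDerivAt (fun s => lcProd φf i (Function.update x k s) *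
        Af i (Function.update x k s i)) D (x k) :=
      (hasDerivAt_G_ne φf Af x hφdiff hord i k hk).differentiableAt.hasDerivAt
    have hdk := (hφdiff k (x k)).hasDerivAt
    set d := deriv (φf k) (x k) with hd
    have hden : HasDerivAt (fun s => φf k s * C * φf i (x i))
        (d * C * φf i (x i)) (x k) := (hdk.mul_const C).mul_const _
    have hdenne : φf k (x k) * C * φf i (x i) ≠ 0 := mul_ne_zero (mul_ne_zero hφk hCne) hφi
    have heq : (fun s => ε * (lcProd φf i (Function.update x k s) * Af i (Function.update x k s i) /
        ((∏ m, φf m (Function.update x k s m)) * φf i (Function.update x k s i)))) =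
        fun s => ε * (lcProd φf i (Function.update x k s) * Af i (Function.update x k s i) /
          (φf k s * C * φf i (x i))) := by
      funext s
      rw [prod_update' φf x k s, Function.update_of_ne (Ne.symm hk)]
    have hGt : HasDerivAt (fun s => ε * (lcProd φf i (Function.update x k s) *
          Af i (Function.update x k s i) / (φf k s * C * φf i (x i))))
        (ε * ((D * (φf k (x k) * C * φf i (x i)) -
          lcProd φf i (Function.update x k (x k)) * Af i (Function.update x k (x k) i) *
            (d * C * φf i (x i))) / (φf k (x k) * C * φf i (x i)) ^ 2))
        (x k) := (hg.div hden hdenne).const_mul ε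
    rw [heq, hGt.deriv, hQ, hupd]
    field_simp

include hφdiff hAdiff hord hφ0 hA0 in
theorem M2 (hε : ε ≠ 0) (i k : Fin n) (hki : k ≠ i) :
    deriv (fun s => ε * (lcProd φf i (Function.update x k s) * Af i (Function.update x k s i) /
        ((∏ m, φf m (Function.update x k s m)) * φf i (Function.update x k s i)))) (x k) /
      (2 * (ε * (lcProd φf k x * Af k (x k) / ((∏ m, φf m (x m)) * φf k (x k)))))
    = deriv (fun s => lcProd φf i (Function.update x k s) * Af i (Function.update x k s i)) (x k) /
        (2 * (lcProd φf k x * Af k (x k))) := by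
  have hCne := eraseProd_ne φf x hφ0 k
  set C := ∏ m ∈ Finset.univ.erase k, φf m (x m) with hCdef
  have hQ : (∏ m, φf m (x m)) = φf k (x k) * C :=
    (Finset.mul_prod_erase Finset.univ (fun m => φf m (x m)) (Finset.mem_univ k)).symm
  have hlcne : lcProd φf i x ≠ 0 := lcProd_ne φf x hord i
  have hlck : lcProd φf k x ≠ 0 := lcProd_ne φf x hord k
  have hAne : Af i (x i) ≠ 0 := hA0 i (x i)
  have hAk : Af k (x k) ≠ 0 := hA0 k (x k)
  have hφk : φf k (x k) ≠ 0 := hφ0 k (x k)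
  have hφi : φf i (x i) ≠ 0 := hφ0 i (x i)
  have hsub := phi_ne φf x hord i k hki
  have hupd : Function.update x k (x k) = x := Function.update_eq_self k x
  have hg := hasDerivAt_G_ne φf Af x hφdiff hord i k hki
  set D := lcProd φf i x * deriv (φf k) (x k) / (φf k (x k) - φf i (x i)) * Af i (x i) with hD
  have hdk := (hφdiff k (x k)).hasDerivAt
  set d := deriv (φf k) (x k) with hd
  have hden : HasDerivAt (fun s => φf k s * C * φf i (x i))
      (d * C * φf i (x i)) (x k) := (hdk.mul_const C).mul_const _
  have hdenne : φf k (x k) * C * φf i (x i) ≠ 0 := mul_ne_zero (mul_ne_zero hφk hCne) hφi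
  have heq : (fun s => ε * (lcProd φf i (Function.update x k s) * Af i (Function.update x k s i) /
      ((∏ m, φf m (Function.update x k s m)) * φf i (Function.update x k s i)))) =
      fun s => ε * (lcProd φf i (Function.update x k s) * Af i (Function.update x k s i) /
        (φf k s * C * φf i (x i))) := by
    funext s
    rw [prod_update' φf x k s, Function.update_of_ne (Ne.symm hki)]
  have hGt : HasDerivAt (fun s => ε * (lcProd φf i (Function.update x k s) *
        Af i (Function.update x k s i) / (φf k s * C * φf i (x i))))
      (ε * ((D * (φf k (x k) * C * φf i (x i)) -
        lcProd φf i (Function.update x k (x k)) * Af i (Function.update x k (x k) i) *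
          (d * C * φf i (x i))) / (φf k (x k) * C * φf i (x i)) ^ 2))
      (x k) := (hg.div hden hdenne).const_mul ε
  rw [heq, hGt.deriv, hg.deriv, hQ, hupd, hD]
  field_simp
  ring
end Aux2

/-!
STATEMENT 10.  On `ℝⁿ` with coordinates `(x₁,…,xₙ)`, let `φ_i(x_i)` and `A_i(x_i)` be
smooth functions of one variable with `φ₁ < φ₂ < ⋯ < φₙ` pointwise, each `φ_i` and each
`A_i` nowhere zero.  Set `Π_i = (φ_i−φ₁)⋯(φ_i−φ_{i−1})(φ_{i+1}−φ_i)⋯(φₙ−φ_i)`,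
`ρ_i = 1/(φ₁⋯φₙ·φ_i)`, `g = Σ Π_i A_i dx_i²`, `g̃ = ± Σ ρ_i Π_i A_i dx_i²` and
`φ = ½ log|φ₁⋯φₙ|`.  Then the weighted connection `∇^φ` of `(ℝⁿ, g, φ)` coincides with
the Levi-Civita connection of `(ℝⁿ, g̃)`:  the Christoffel symbols satisfy
`Γ̃ᵏᵢⱼ = Γᵏᵢⱼ − (∂_i φ)δⱼᵏ − (∂_j φ)δᵢᵏ`.  (In particular `g` and `g̃` are projectively
equivalent.)
-/
theorem weighted_connection_eq_levi_civita_of_projective_metric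
    {n : ℕ} (φf Af : Fin n → ℝ → ℝ) (ε : ℝ) (hε : ε = 1 ∨ ε = -1)
    (hφdiff : ∀ i, Differentiable ℝ (φf i)) (hAdiff : ∀ i, Differentiable ℝ (Af i))
    (hord : ∀ i j : Fin n, i < j → ∀ s t : ℝ, φf i s < φf j t)
    (hφ0 : ∀ (i : Fin n) (s : ℝ), φf i s ≠ 0) (hA0 : ∀ (i : Fin n) (s : ℝ), Af i s ≠ 0)
    -- the metric `g = Σ Π_i A_i dx_i²`
    (G : Fin n → (Fin n → ℝ) → ℝ) (hG : G = fun l y => lcProd φf l y * Af l (y l))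
    -- the metric `g̃ = ± Σ ρ_i Π_i A_i dx_i²`
    (Gt : Fin n → (Fin n → ℝ) → ℝ)
    (hGt : Gt = fun l y => ε * (lcProd φf l y * Af l (y l) / ((∏ m, φf m (y m)) * φf l (y l))))
    -- the density `φ = ½ log|φ₁⋯φₙ|`
    (φw : (Fin n → ℝ) → ℝ) (hφw : φw = fun y => (1 / 2) * Real.log |∏ m, φf m (y m)|) :
    ∀ (x : Fin n → ℝ) (k i j : Fin n),
      diagChristoffel Gt k i j x
        = diagChristoffel G k i j x
          - partialD i φw x * (if j = k then 1 else 0)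
          - partialD j φw x * (if i = k then 1 else 0) := by
  intro x k i j
  have hεne : ε ≠ 0 := by rcases hε with h | h <;> rw [h] <;> norm_num
  subst hG hGt hφw
  simp only [diagChristoffel]
  rw [partialD_phiw φf x hφdiff hφ0 i, partialD_phiw φf x hφdiff hφ0 j]
  by_cases hij : i = j
  · subst hij
    by_cases hk : k = i
    · subst hk
      simp only [↓reduceIte, partialD]
      rw [M1 φf Af ε hφdiff hAdiff hord hφ0 hA0 x hεne k k, if_pos rfl]
      ring
    · have hik : ¬ i = k := fun h => hk h.symm
      simp only [↓reduceIte, if_neg hk, if_neg hik, partialD]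
      rw [neg_div, neg_div, M2 φf Af ε hφdiff hAdiff hord hφ0 hA0 x hεne i k hk]
      ring
  · rw [if_neg hij, if_neg hij]
    by_cases hk : k = i
    · subst hk
      have hjk : ¬ j = k := fun h => hij h.symm
      simp only [↓reduceIte, if_neg hjk, partialD]
      rw [M1 φf Af ε hφdiff hAdiff hord hφ0 hA0 x hεne k j, if_neg hjk]
      ring
    · by_cases hkj : k = j
      · subst hkj
        have hik : ¬ i = k := fun h => hk h.symm
        simp only [if_neg hk, ↓reduceIte, if_neg hik, partialD]
        rw [M1 φf Af ε hφdiff hAdiff hord hφ0 hA0 x hεne k i, if_neg hik]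
        ring
      · have hjk : ¬ j = k := fun h => hkj h.symm
        have hik : ¬ i = k := fun h => hk h.symm
        simp only [if_neg hk, if_neg hkj, if_neg hjk, if_neg hik]
        ring
end

section
/- Let (N,g,φ) be ℝⁿ with the metric g = Σ_j Π_j dx_j² of the Levi-Civita construction with φₙ(xₙ) = n + cos xₙ, the other φ_j pairwise distinct nonzero constants less than n−1, and A_j = 1. For i < n let M_i ⊂ N be the 2-dimensional submanifold defined by x_j = 0 for all j ∉ {i,n}. Then M_i is a totally geodesic submanifold of (N,g), and for any piecewise C¹ loop σ in M_i based at p ∈ M_i, the Riemannian (g-)parallel translation P_σ acts as the identity on the normal space T_p^⊥M_i. -/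
/-!
STATEMENT 18.  Let `(N,g,φ)` be `ℝⁿ` with the metric `g = Σ_j Π_j dx_j²` of the
Levi-Civita construction with `φₙ(xₙ) = n + cos xₙ`, the other `φ_j` pairwise distinct
nonzero constants less than `n − 1`, and `A_j = 1`.  For `i₀ < n` let
`M_{i₀} = {x | x_j = 0 for all j ∉ {i₀, n}} ⊂ N` be the corresponding 2-dimensional
coordinate submanifold.  Then:

(a) `M_{i₀}` is totally geodesic in `(N,g)` — its second fundamental form vanishes: for
    tangent coordinate directions `j, l ∈ {i₀, n}`, the Christoffel symbols
    `Γᵏⱼₗ` with normal index `k ∉ {i₀, n}` vanish at every point of `M_{i₀}`;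

(b) for every piecewise `C¹` loop `σ` in `M_{i₀}`, the Riemannian (`g`-)parallel
    translation along `σ` acts as the identity on the normal space `T^⊥M_{i₀}` (the
    `g`-orthogonal complement of the span of the coordinate directions `i₀, n`, i.e.
    the vectors `v` with `v_{i₀} = vₙ = 0`):  any parallel field `X` along `σ` starting
    at such a `v` returns to `v`.

(Indices are `0`-based in the formalization: the last coordinate `n` of the statement is
the index `j` with `(j : ℕ) + 1 = n`.)
-/
private lemma constAux : ∀ (N : ℕ) (exc : Finset ℝ) (f : ℝ → ℝ), Continuous f →
    ∀ a b : ℝ, a < b → (exc.filter (fun r => r ∈ Set.Ioo a b)).card ≤ N →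
    (∀ t ∈ Set.Ioo a b, t ∉ exc → HasDerivAt f 0 t) → f a = f b := by
  intro N
  induction N with
  | zero =>
    intro exc f hf a b hab hcard hderiv
    have hemp : ∀ t ∈ Set.Ioo a b, t ∉ exc := by
      intro t ht hte
      have h1 : t ∈ exc.filter (fun r => r ∈ Set.Ioo a b) := Finset.mem_filter.2 ⟨hte, ht⟩
      have := Finset.card_pos.2 ⟨t, h1⟩
      omega
    have key : ∀ a' ∈ Set.Ioo a b, f a' = f b := by
      intro a' ha'
      have h := constant_of_has_deriv_right_zero (f := f) (a := a') (b := b)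
        hf.continuousOn (fun x hx => by
          have hx' : x ∈ Set.Ioo a b := ⟨lt_of_lt_of_le ha'.1 hx.1, hx.2⟩
          exact (hderiv x hx' (hemp x hx')).hasDerivWithinAt)
      exact (h b (Set.right_mem_Icc.2 ha'.2.le)).symm
    have heq : Set.EqOn f (fun _ => f b) (Set.Ioo a b) := fun x hx => key x hx
    have hcl := heq.closure hf continuous_const
    rw [closure_Ioo hab.ne] at hcl
    exact hcl (Set.left_mem_Icc.2 hab.le)
  | succ N ih =>
    intro exc f hf a b hab hcard hderiv
    by_cases hne : (exc.filter (fun r => r ∈ Set.Ioo a b)).Nonempty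
    · obtain ⟨r, hr⟩ := hne
      obtain ⟨hre, hrI⟩ := Finset.mem_filter.1 hr
      have h1 : f a = f r := by
        apply ih exc f hf a r hrI.1
        · have hsub : exc.filter (fun x => x ∈ Set.Ioo a r) ⊆
              (exc.filter (fun x => x ∈ Set.Ioo a b)).erase r := by
            intro x hx
            obtain ⟨hxe, hxI⟩ := Finset.mem_filter.1 hx
            refine Finset.mem_erase.2 ⟨fun h => by simp [h] at hxI, ?_⟩
            exact Finset.mem_filter.2 ⟨hxe, hxI.1, hxI.2.trans hrI.2⟩
          have := Finset.card_le_card hsub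
          have := Finset.card_erase_of_mem hr
          omega
        · intro t ht hte
          exact hderiv t ⟨ht.1, ht.2.trans hrI.2⟩ hte
      have h2 : f r = f b := by
        apply ih exc f hf r b hrI.2
        · have hsub : exc.filter (fun x => x ∈ Set.Ioo r b) ⊆
              (exc.filter (fun x => x ∈ Set.Ioo a b)).erase r := by
            intro x hx
            obtain ⟨hxe, hxI⟩ := Finset.mem_filter.1 hx
            refine Finset.mem_erase.2 ⟨fun h => by simp [h] at hxI, ?_⟩
            exact Finset.mem_filter.2 ⟨hxe, hrI.1.trans hxI.1, hxI.2⟩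
          have := Finset.card_le_card hsub
          have := Finset.card_erase_of_mem hr
          omega
        · intro t ht hte
          exact hderiv t ⟨hrI.1.trans ht.1, ht.2⟩ hte
      exact h1.trans h2
    · rw [Finset.not_nonempty_iff_eq_empty] at hne
      exact ih exc f hf a b hab (by rw [hne]; simp) hderiv

private lemma constOf (exc : Finset ℝ) (f : ℝ → ℝ) (hf : Continuous f)
    (hd : ∀ t ∉ exc, HasDerivAt f 0 t) (a b : ℝ) (hab : a < b) : f a = f b :=
  constAux _ exc f hf a b hab le_rfl (fun t _ ht => hd t ht)


theorem levi_civita_coordinate_plane_totally_geodesic_and_normal_holonomy_trivial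
    (n : ℕ) (c : Fin n → ℝ) (φf : Fin n → ℝ → ℝ)
    (hconst : ∀ i : Fin n, (i : ℕ) + 1 ≠ n → φf i = fun _ => c i)
    (hlast : ∀ i : Fin n, (i : ℕ) + 1 = n → φf i = fun s => (n : ℝ) + Real.cos s)
    (hord : ∀ i j : Fin n, i < j → ∀ s t : ℝ, φf i s < φf j t)
    (hzero : ∀ (i : Fin n) (s : ℝ), φf i s ≠ 0)
    (hbound : ∀ i : Fin n, (i : ℕ) + 1 ≠ n → c i < (n : ℝ) - 1)
    -- the metric `g = Σ_j Π_j dx_j²`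
    (G : Fin n → (Fin n → ℝ) → ℝ) (hG : G = fun l y => lcProd φf l y)
    -- the 2-dimensional coordinate submanifold `M_{i₀}`
    (i₀ : Fin n) (hi₀ : (i₀ : ℕ) + 1 ≠ n) :
    -- (a) `M_{i₀}` is totally geodesic: the second fundamental form vanishes
    (∀ x : Fin n → ℝ, (∀ j : Fin n, j ≠ i₀ → (j : ℕ) + 1 ≠ n → x j = 0) →
      ∀ j l k : Fin n,
        (j = i₀ ∨ (j : ℕ) + 1 = n) → (l = i₀ ∨ (l : ℕ) + 1 = n) →
        ¬(k = i₀ ∨ (k : ℕ) + 1 = n) →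
        diagChristoffel G k j l x = 0) ∧
    -- (b) parallel translation around loops in `M_{i₀}` fixes the normal space
    (∀ (T : ℝ) (σ σd : ℝ → Fin n → ℝ) (exc : Finset ℝ),
      0 < T → Continuous σ →
      (∀ t, ∀ j : Fin n, j ≠ i₀ → (j : ℕ) + 1 ≠ n → σ t j = 0) →
      σ T = σ 0 →
      (∀ t ∉ exc, HasDerivAt σ (σd t) t) →
      (∃ C, ∀ t ∈ Set.Icc (0 : ℝ) T, ‖σd t‖ ≤ C) →
      ∀ (v : Fin n → ℝ) (X : ℝ → Fin n → ℝ),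
        (∀ j : Fin n, (j = i₀ ∨ (j : ℕ) + 1 = n) → v j = 0) →
        Continuous X → X 0 = v →
        (∀ t ∉ exc, HasDerivAt X (fun k =>
          -(∑ i, ∑ j, diagChristoffel G k i j (σ t) * σd t i * X t j)) t) →
        X T = v) := by
  subst hG
  have hn : 0 < n := i₀.pos
  obtain ⟨m, hmv⟩ : ∃ m : Fin n, (m : ℕ) + 1 = n :=
    ⟨⟨n - 1, by omega⟩, by show n - 1 + 1 = n; omega⟩
  have hjm : ∀ j : Fin n, (j : ℕ) + 1 = n ↔ j = m := by
    intro j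
    constructor
    · intro h; apply Fin.ext; omega
    · rintro rfl; exact hmv
  have hi₀m : i₀ ≠ m := fun h => hi₀ ((hjm i₀).2 h)
  have hφc : ∀ l : Fin n, l ≠ m → ∀ a b : ℝ, φf l a = φf l b := by
    intro l hl a b
    rw [hconst l (fun h => hl ((hjm l).1 h))]
  have hφm : ∀ s : ℝ, φf m s = (n : ℝ) + Real.cos s := by
    intro s; rw [hlast m hmv]
  obtain ⟨u, hu⟩ : ∃ u : ℝ → Fin n → ℝ, u = fun s l => if l = m then s else 0 := ⟨_, rfl⟩
  obtain ⟨hFn, hhF⟩ : ∃ F : Fin n → ℝ → ℝ, F = fun k s => lcProd φf k (u s) := ⟨_, rfl⟩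
  have hval : ∀ (y : Fin n → ℝ) (l : Fin n), φf l (u (y m) l) = φf l (y l) := by
    intro y l
    by_cases hl : l = m
    · subst hl; rw [hu]; simp
    · rw [hu]; simp only [if_neg hl]; exact hφc l hl 0 (y l)
  have hGh : ∀ (k : Fin n) (y : Fin n → ℝ), lcProd φf k y = hFn k (y m) := by
    intro k y
    rw [hhF]
    simp only [lcProd]
    congr 1
    · exact (Finset.prod_congr rfl fun l _ => by rw [hval, hval]).symm
    · exact (Finset.prod_congr rfl fun l _ => by rw [hval, hval]).symm
  obtain ⟨ψd, hψd⟩ : ∃ d : Fin n → ℝ → ℝ, d = fun l s => if l = m then -Real.sin s else 0 :=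
    ⟨_, rfl⟩
  have hψ : ∀ (l : Fin n) (s : ℝ), HasDerivAt (fun t => φf l (u t l)) (ψd l s) s := by
    intro l s
    by_cases hl : l = m
    · subst hl
      have h1 : (fun t => φf l (u t l)) = fun t => (n : ℝ) + Real.cos t := by
        funext t; rw [hu]; simp [hφm]
      rw [h1, hψd]
      simp only [if_pos rfl]
      exact (Real.hasDerivAt_cos s).const_add _
    · have h1 : (fun t => φf l (u t l)) = fun _ => φf l 0 := by
        funext t; rw [hu]; simp only [if_neg hl]
      rw [h1, hψd]
      simp only [if_neg hl]
      exact hasDerivAt_const _ _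
  have hdiffable : ∀ k : Fin n, Differentiable ℝ (hFn k) := by
    intro k s
    have h1 := HasDerivAt.fun_finsetProd (u := Finset.univ.filter (fun l => l < k))
      (f := fun l t => φf k (u t k) - φf l (u t l)) (f' := fun l => ψd k s - ψd l s) (x := s)
      (fun l _ => (hψ k s).sub (hψ l s))
    have h2 := HasDerivAt.fun_finsetProd (u := Finset.univ.filter (fun l => k < l))
      (f := fun l t => φf l (u t l) - φf k (u t k)) (f' := fun l => ψd l s - ψd k s) (x := s)
      (fun l _ => (hψ l s).sub (hψ k s))
    have h3 := (h1.fun_mul h2).differentiableAt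
    have heq : hFn k = fun t =>
        (∏ l ∈ Finset.univ.filter (fun l => l < k), (φf k (u t k) - φf l (u t l))) *
        (∏ l ∈ Finset.univ.filter (fun l => k < l), (φf l (u t l) - φf k (u t k))) := by
      funext t; rw [hhF]; rfl
    rw [heq]
    exact h3
  obtain ⟨Hd, hHd⟩ : ∃ D : Fin n → ℝ → ℝ, D = fun k s => deriv (hFn k) s := ⟨_, rfl⟩
  have hdiff : ∀ (k : Fin n) (s : ℝ), HasDerivAt (hFn k) (Hd k s) s := by
    intro k s; rw [hHd]; exact (hdiffable k s).hasDerivAt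
  have hpos : ∀ (k : Fin n) (s : ℝ), 0 < hFn k s := by
    intro k s
    rw [hhF]
    apply mul_pos
    · apply Finset.prod_pos
      intro l hl
      exact sub_pos.2 (hord l k (Finset.mem_filter.1 hl).2 _ _)
    · apply Finset.prod_pos
      intro l hl
      exact sub_pos.2 (hord k l (Finset.mem_filter.1 hl).2 _ _)
  have hP0 : ∀ (i : Fin n), i ≠ m → ∀ (j : Fin n) (x : Fin n → ℝ),
      partialD i (fun y => lcProd φf j y) x = 0 := by
    intro i hi j x
    have h1 : (fun s => lcProd φf j (Function.update x i s)) = fun _ => hFn j (x m) := by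
      funext s
      rw [hGh j]
      congr 1
      exact Function.update_of_ne (Ne.symm hi) s x
    simp only [partialD]
    rw [h1]
    exact deriv_const _ _
  have hPm : ∀ (j : Fin n) (x : Fin n → ℝ),
      partialD m (fun y => lcProd φf j y) x = Hd j (x m) := by
    intro j x
    have h1 : (fun s => lcProd φf j (Function.update x m s)) = fun s => hFn j s := by
      funext s
      rw [hGh j]
      congr 1
      exact Function.update_self m s x
    simp only [partialD]
    rw [h1, hHd]
  obtain ⟨Chr, hChr⟩ : ∃ C : Fin n → Fin n → Fin n → ℝ → ℝ, C = fun k i j s =>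
    if i = m ∧ j = m ∧ k = m then Hd m s / (2 * hFn m s)
    else if i = j ∧ k = m ∧ ¬i = m then -Hd i s / (2 * hFn m s)
    else if i = m ∧ k = j ∧ ¬j = m then Hd j s / (2 * hFn j s)
    else if j = m ∧ k = i ∧ ¬i = m then Hd i s / (2 * hFn i s)
    else 0 := ⟨_, rfl⟩
  have hΓ : ∀ (k i j : Fin n) (x : Fin n → ℝ),
      diagChristoffel (fun l y => lcProd φf l y) k i j x = Chr k i j (x m) := by
    intro k i j x
    have e0 : ∀ (i' : Fin n), ¬i' = m → ∀ (j' : Fin n),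
        partialD i' (fun y => lcProd φf j' y) x = 0 := fun i' h j' => hP0 i' h j' x
    have em : ∀ (j' : Fin n), partialD m (fun y => lcProd φf j' y) x = Hd j' (x m) :=
      fun j' => hPm j' x
    have eg : ∀ (k' : Fin n), lcProd φf k' x = hFn k' (x m) := fun k' => hGh k' x
    rw [hChr]
    simp only [diagChristoffel]
    by_cases hij : i = j
    · rw [if_pos hij]
      by_cases hki : k = i
      · rw [if_pos hki]
        by_cases hkm : k = m
        · have him : i = m := hki.symm.trans hkm
          have hjm2 : j = m := hij.symm.trans him
          rw [him, hjm2, hkm, em, eg, if_pos ⟨rfl, rfl, rfl⟩]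
        · have him : ¬i = m := fun h => hkm (hki.trans h)
          rw [e0 i him, if_neg (fun h => him h.1), if_neg (fun h => hkm h.2.1),
            if_neg (fun h => him h.1), if_neg (fun h => him (hij.trans h.1))]
          simp
      · rw [if_neg hki]
        by_cases hkm : k = m
        · have him : ¬i = m := fun h => hki (hkm.trans h.symm)
          rw [hkm, em, eg, if_neg (fun h => him h.1), if_pos ⟨hij, rfl, him⟩]
        · rw [e0 k hkm, if_neg (fun h => hkm h.2.2), if_neg (fun h => hkm h.2.1),
            if_neg (fun h => hki (h.2.1.trans hij.symm)), if_neg (fun h => hki h.2.1)]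
          simp
    · rw [if_neg hij]
      by_cases hki : k = i
      · rw [if_pos hki]
        by_cases hjm2 : j = m
        · have him : ¬i = m := fun h => hij (h.trans hjm2.symm)
          rw [hjm2, em, eg, if_neg (fun h => him h.1), if_neg (fun h => him h.1),
            if_neg (fun h => him h.1), if_pos ⟨rfl, hki, him⟩]
        · rw [e0 j hjm2, if_neg (fun h => hjm2 h.2.1), if_neg (fun h => hij h.1),
            if_neg (fun h => hij (hki.symm.trans h.2.1)), if_neg (fun h => hjm2 h.1)]
          simp
      · rw [if_neg hki]
        by_cases hkj : k = j
        · rw [if_pos hkj]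
          by_cases him : i = m
          · have hjm2 : ¬j = m := fun h => hij (him.trans h.symm)
            rw [him, em, eg, if_neg (fun h => hjm2 h.2.1), if_neg (fun h => hjm2 h.1.symm),
              if_pos ⟨rfl, hkj, hjm2⟩]
          · rw [e0 i him, if_neg (fun h => him h.1), if_neg (fun h => hij h.1),
              if_neg (fun h => him h.1), if_neg (fun h => hki h.2.1)]
            simp
        · rw [if_neg hkj, if_neg (fun h => hij (h.1.trans h.2.1.symm)),
            if_neg (fun h => hij h.1), if_neg (fun h => hkj h.2.1),
            if_neg (fun h => hki h.2.1)]
  constructor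
  · intro x _ j l k hj hl hk
    push_neg at hk
    obtain ⟨hk1, hk2⟩ := hk
    have hkm : k ≠ m := fun h => hk2 ((hjm k).2 h)
    have hjt : j = i₀ ∨ j = m := hj.imp id (fun h => (hjm j).1 h)
    have hlt : l = i₀ ∨ l = m := hl.imp id (fun h => (hjm l).1 h)
    rw [hΓ]
    simp only [hChr]
    have c1 : ¬(j = m ∧ l = m ∧ k = m) := fun h => hkm h.2.2
    have c2 : ¬(j = l ∧ k = m ∧ ¬j = m) := fun h => hkm h.2.1
    have c3 : ¬(j = m ∧ k = l ∧ ¬l = m) := by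
      rintro ⟨h1, h2, h3⟩
      rcases hlt with h | h
      · exact hk1 (h2.trans h)
      · exact h3 h
    have c4 : ¬(l = m ∧ k = j ∧ ¬j = m) := by
      rintro ⟨h1, h2, h3⟩
      rcases hjt with h | h
      · exact hk1 (h2.trans h)
      · exact h3 h
    rw [if_neg c1, if_neg c2, if_neg c3, if_neg c4]
  · intro T σ σd exc hT hσc hσM hloop hσd hbd v X hv hXc hX0 hXd
    have hσM' : ∀ t, ∀ j : Fin n, j ≠ i₀ → j ≠ m → σ t j = 0 := fun t j h1 h2 =>
      hσM t j h1 (fun h => h2 ((hjm j).1 h))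
    have hvt : v i₀ = 0 := hv i₀ (Or.inl rfl)
    have hvm : v m = 0 := hv m (Or.inr hmv)
    have hσdc : ∀ t ∉ exc, ∀ j : Fin n, HasDerivAt (fun t => σ t j) (σd t j) t :=
      fun t ht j => (hasDerivAt_pi.1 (hσd t ht)) j
    have hσd0 : ∀ t ∉ exc, ∀ j : Fin n, j ≠ i₀ → j ≠ m → σd t j = 0 := by
      intro t ht j h1 h2
      have hc0 : (fun t => σ t j) = fun _ => (0 : ℝ) := funext fun t => hσM' t j h1 h2
      have h3 := hσdc t ht j
      rw [hc0] at h3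
      exact h3.unique (hasDerivAt_const _ _)
    have hXdc : ∀ t ∉ exc, ∀ k : Fin n, HasDerivAt (fun t => X t k)
        (-(∑ i, ∑ j, Chr k i j (σ t m) * σd t i * X t j)) t := by
      intro t ht k
      have h3 := (hasDerivAt_pi.1 (hXd t ht)) k
      have h4 : (∑ i, ∑ j, Chr k i j (σ t m) * σd t i * X t j)
          = ∑ i, ∑ j, diagChristoffel (fun l y => lcProd φf l y) k i j (σ t) * σd t i * X t j :=
        Finset.sum_congr rfl fun i _ => Finset.sum_congr rfl fun j _ => by rw [hΓ]
      rw [h4]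
      exact h3
    have hσmc : Continuous (fun t => σ t m) := (continuous_apply m).comp hσc
    have hQd : ∀ t ∉ exc, ∀ k : Fin n, HasDerivAt (fun t => hFn k (σ t m))
        (Hd k (σ t m) * σd t m) t := by
      intro t ht k
      exact (hdiff k (σ t m)).comp t (hσdc t ht m)
    have hQc : ∀ k : Fin n, Continuous (fun t => hFn k (σ t m)) :=
      fun k => ((hdiffable k).continuous).comp hσmc
    have hzeroChr : ∀ (k i j : Fin n) (s : ℝ),
        ¬(i = m ∧ j = m ∧ k = m) → ¬(i = j ∧ k = m ∧ ¬i = m) →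
        ¬(i = m ∧ k = j ∧ ¬j = m) → ¬(j = m ∧ k = i ∧ ¬i = m) → Chr k i j s = 0 := by
      intro k i j s c1 c2 c3 c4
      simp only [hChr]
      rw [if_neg c1, if_neg c2, if_neg c3, if_neg c4]
    have hsum : ∀ t ∉ exc, ∀ k : Fin n,
        (∑ i, ∑ j, Chr k i j (σ t m) * σd t i * X t j) =
        if k = m then Hd m (σ t m) / (2 * hFn m (σ t m)) * σd t m * X t m
          - Hd i₀ (σ t m) / (2 * hFn m (σ t m)) * σd t i₀ * X t i₀
        else if k = i₀ then
          Hd i₀ (σ t m) / (2 * hFn i₀ (σ t m)) * (σd t i₀ * X t m + σd t m * X t i₀)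
        else Hd k (σ t m) / (2 * hFn k (σ t m)) * σd t m * X t k := by
      intro t ht k
      have hpair : (∑ i, ∑ j, Chr k i j (σ t m) * σd t i * X t j)
          = (∑ j, Chr k i₀ j (σ t m) * σd t i₀ * X t j)
            + (∑ j, Chr k m j (σ t m) * σd t m * X t j) := by
        rw [← Finset.sum_subset (Finset.subset_univ ({i₀, m} : Finset (Fin n)))
            (fun i _ hi => by
              simp only [Finset.mem_insert, Finset.mem_singleton] at hi
              push_neg at hi
              have h0 := hσd0 t ht i hi.1 hi.2
              exact Finset.sum_eq_zero fun j _ => by rw [h0, mul_zero, zero_mul]),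
          Finset.sum_pair hi₀m]
      rw [hpair]
      by_cases hkm : k = m
      · rw [if_pos hkm]
        have e1 : (∑ j, Chr k i₀ j (σ t m) * σd t i₀ * X t j)
            = -Hd i₀ (σ t m) / (2 * hFn m (σ t m)) * σd t i₀ * X t i₀ := by
          rw [Finset.sum_eq_single_of_mem i₀ (Finset.mem_univ i₀)
            (fun j _ hj => by
              rw [hzeroChr k i₀ j _ (fun h => hi₀m h.1) (fun h => hj (h.1.symm))
                (fun h => hi₀m h.1) (fun h => hi₀m ((hkm.symm.trans h.2.1).symm))]
              rw [zero_mul, zero_mul])]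
          have : Chr k i₀ i₀ (σ t m) = -Hd i₀ (σ t m) / (2 * hFn m (σ t m)) := by
            simp [hChr, hkm, hi₀m]
          rw [this]
        have e2 : (∑ j, Chr k m j (σ t m) * σd t m * X t j)
            = Hd m (σ t m) / (2 * hFn m (σ t m)) * σd t m * X t m := by
          rw [Finset.sum_eq_single_of_mem m (Finset.mem_univ m)
            (fun j _ hj => by
              rw [hzeroChr k m j _ (fun h => hj h.2.1) (fun h => hj h.1.symm)
                (fun h => hj ((hkm.symm.trans h.2.1).symm)) (fun h => hj h.1)]
              rw [zero_mul, zero_mul])]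
          have : Chr k m m (σ t m) = Hd m (σ t m) / (2 * hFn m (σ t m)) := by
            simp [hChr, hkm]
          rw [this]
        rw [e1, e2]
        ring
      · rw [if_neg hkm]
        by_cases hki₀ : k = i₀
        · rw [if_pos hki₀]
          have e1 : (∑ j, Chr k i₀ j (σ t m) * σd t i₀ * X t j)
              = Hd i₀ (σ t m) / (2 * hFn i₀ (σ t m)) * σd t i₀ * X t m := by
            rw [Finset.sum_eq_single_of_mem m (Finset.mem_univ m)
              (fun j _ hj => by
                rw [hzeroChr k i₀ j _ (fun h => hi₀m h.1) (fun h => hkm h.2.1)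
                  (fun h => hi₀m h.1) (fun h => hj h.1)]
                rw [zero_mul, zero_mul])]
            have : Chr k i₀ m (σ t m) = Hd i₀ (σ t m) / (2 * hFn i₀ (σ t m)) := by
              simp [hChr, hki₀, hi₀m]
            rw [this]
          have e2 : (∑ j, Chr k m j (σ t m) * σd t m * X t j)
              = Hd i₀ (σ t m) / (2 * hFn i₀ (σ t m)) * σd t m * X t i₀ := by
            rw [Finset.sum_eq_single_of_mem i₀ (Finset.mem_univ i₀)
              (fun j _ hj => by
                rw [hzeroChr k m j _ (fun h => hkm h.2.2) (fun h => hkm h.2.1)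
                  (fun h => hj (hki₀.symm.trans h.2.1).symm)
                  (fun h => hi₀m (hki₀.symm.trans h.2.1))]
                rw [zero_mul, zero_mul])]
            have : Chr k m i₀ (σ t m) = Hd i₀ (σ t m) / (2 * hFn i₀ (σ t m)) := by
              simp [hChr, hki₀, hi₀m, Ne.symm hi₀m]
            rw [this]
          rw [e1, e2]
          ring
        · rw [if_neg hki₀]
          have e1 : (∑ j, Chr k i₀ j (σ t m) * σd t i₀ * X t j) = 0 := by
            apply Finset.sum_eq_zero
            intro j _
            rw [hzeroChr k i₀ j _ (fun h => hi₀m h.1) (fun h => hkm h.2.1)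
              (fun h => hi₀m h.1) (fun h => hki₀ h.2.1)]
            rw [zero_mul, zero_mul]
          have e2 : (∑ j, Chr k m j (σ t m) * σd t m * X t j)
              = Hd k (σ t m) / (2 * hFn k (σ t m)) * σd t m * X t k := by
            rw [Finset.sum_eq_single_of_mem k (Finset.mem_univ k)
              (fun j _ hj => by
                rw [hzeroChr k m j _ (fun h => hkm h.2.2) (fun h => hkm h.2.1)
                  (fun h => hj h.2.1.symm) (fun h => hkm h.2.1)]
                rw [zero_mul, zero_mul])]
            have : Chr k m k (σ t m) = Hd k (σ t m) / (2 * hFn k (σ t m)) := by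
              simp [hChr, hkm, Ne.symm hkm]
            rw [this]
          rw [e1, e2]
          ring
    have hXTk : ∀ k : Fin n, k ≠ i₀ → k ≠ m → X T k = v k := by
      intro k hk1 hk2
      obtain ⟨S, hS⟩ : ∃ S : ℝ → ℝ, S = fun t => X t k * Real.sqrt (hFn k (σ t m)) := ⟨_, rfl⟩
      have hSc : Continuous S := by
        rw [hS]
        exact ((continuous_apply k).comp hXc).mul (Real.continuous_sqrt.comp (hQc k))
      have hSd : ∀ t ∉ exc, HasDerivAt S 0 t := by
        intro t ht
        have h1 := hXdc t ht k
        have h2 := (Real.hasDerivAt_sqrt (ne_of_gt (hpos k (σ t m)))).comp t (hQd t ht k)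
        have h3 : HasDerivAt (fun t => X t k * Real.sqrt (hFn k (σ t m))) _ t :=
          h1.fun_mul h2
        rw [hS]
        convert h3 using 1
        rw [hsum t ht k, if_neg hk2, if_neg hk1]
        have hq : (0:ℝ) < hFn k (σ t m) := hpos k _
        have hr0 : Real.sqrt (hFn k (σ t m)) ≠ 0 := ne_of_gt (Real.sqrt_pos.2 hq)
        field_simp
        linear_combination (Hd k (σ t m) * σd t m * X t k) * Real.mul_self_sqrt hq.le
      have hcst := constOf exc S hSc hSd 0 T hT
      rw [hS] at hcst
      simp only at hcst
      rw [hX0, hloop] at hcst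
      have hr0 : Real.sqrt (hFn k (σ 0 m)) ≠ 0 :=
        ne_of_gt (Real.sqrt_pos.2 (hpos k (σ 0 m)))
      exact (mul_right_cancel₀ hr0 hcst).symm
    obtain ⟨Nf, hNf⟩ : ∃ Nf : ℝ → ℝ, Nf = fun t => ∑ k, (X t k)^2 * hFn k (σ t m) := ⟨_, rfl⟩
    have hNc : Continuous Nf := by
      rw [hNf]
      apply continuous_finset_sum
      intro k _
      exact (((continuous_apply k).comp hXc).pow 2).mul (hQc k)
    have hNd : ∀ t ∉ exc, HasDerivAt Nf 0 t := by
      intro t ht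
      have hterm : ∀ k : Fin n, HasDerivAt (fun t => (X t k)^2 * hFn k (σ t m))
          ((2 * X t k * (-(∑ i, ∑ j, Chr k i j (σ t m) * σd t i * X t j))) * hFn k (σ t m)
            + (X t k)^2 * (Hd k (σ t m) * σd t m)) t := by
        intro k
        have h1 := (hXdc t ht k).fun_pow 2
        have h2 : HasDerivAt (fun t => (X t k)^2 * hFn k (σ t m)) _ t := h1.fun_mul (hQd t ht k)
        convert h2 using 2
        push_cast
        ring
      have hall := HasDerivAt.fun_sum (u := (Finset.univ : Finset (Fin n)))
        (fun k _ => hterm k)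
      have h0 : (∑ k : Fin n,
          ((2 * X t k * (-(∑ i, ∑ j, Chr k i j (σ t m) * σd t i * X t j))) * hFn k (σ t m)
            + (X t k)^2 * (Hd k (σ t m) * σd t m))) = 0 := by
        rw [← Finset.sum_subset (Finset.subset_univ ({i₀, m} : Finset (Fin n)))
            (fun k _ hk => by
              simp only [Finset.mem_insert, Finset.mem_singleton] at hk
              push_neg at hk
              rw [hsum t ht k, if_neg hk.2, if_neg hk.1]
              have hq : hFn k (σ t m) ≠ 0 := ne_of_gt (hpos _ _)
              field_simp
              ring),
          Finset.sum_pair hi₀m]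
        rw [hsum t ht i₀, hsum t ht m, if_neg hi₀m, if_pos rfl, if_pos rfl]
        have hq1 : hFn i₀ (σ t m) ≠ 0 := ne_of_gt (hpos _ _)
        have hq2 : hFn m (σ t m) ≠ 0 := ne_of_gt (hpos _ _)
        field_simp
        ring
      rw [hNf, ← h0]
      exact hall
    have hNcst := constOf exc Nf hNc hNd 0 T hT
    rw [hNf] at hNcst
    simp only at hNcst
    rw [hX0, hloop] at hNcst
    have hdiffsum : (∑ k : Fin n,
        ((X T k)^2 * hFn k (σ 0 m) - (v k)^2 * hFn k (σ 0 m))) = 0 := by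
      rw [Finset.sum_sub_distrib, ← hNcst, sub_self]
    have hsplit := Finset.sum_subset (Finset.subset_univ ({i₀, m} : Finset (Fin n)))
      (f := fun k => (X T k)^2 * hFn k (σ 0 m) - (v k)^2 * hFn k (σ 0 m))
      (fun k _ hk => by
        simp only [Finset.mem_insert, Finset.mem_singleton] at hk
        push_neg at hk
        show (X T k)^2 * hFn k (σ 0 m) - (v k)^2 * hFn k (σ 0 m) = 0
        rw [hXTk k hk.1 hk.2]
        ring)
    rw [Finset.sum_pair hi₀m, hdiffsum] at hsplit
    rw [hvt, hvm] at hsplit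
    have hA : (X T i₀)^2 * hFn i₀ (σ 0 m) = 0 := by
      have h1 := mul_nonneg (sq_nonneg (X T i₀)) (hpos i₀ (σ 0 m)).le
      have h2 := mul_nonneg (sq_nonneg (X T m)) (hpos m (σ 0 m)).le
      nlinarith [hsplit]
    have hB : (X T m)^2 * hFn m (σ 0 m) = 0 := by
      have h1 := mul_nonneg (sq_nonneg (X T i₀)) (hpos i₀ (σ 0 m)).le
      have h2 := mul_nonneg (sq_nonneg (X T m)) (hpos m (σ 0 m)).le
      nlinarith [hsplit]
    have hXi : X T i₀ = 0 := by
      rcases mul_eq_zero.1 hA with h | h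
      · exact pow_eq_zero_iff two_ne_zero |>.1 h
      · exact absurd h (ne_of_gt (hpos _ _))
    have hXm : X T m = 0 := by
      rcases mul_eq_zero.1 hB with h | h
      · exact pow_eq_zero_iff two_ne_zero |>.1 h
      · exact absurd h (ne_of_gt (hpos _ _))
    funext j
    by_cases hj1 : j = i₀
    · rw [hj1, hvt]
      exact hXi
    · by_cases hj2 : j = m
      · rw [hj2, hvm]
        exact hXm
      · exact hXTk j hj1 hj2
end
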